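/- Let p be a prime number and let s₁₂, s₃₂ ∈ ℂ with Re(s₁₂) + Re(s₃₂) < -1. Then ∫_{ℚ_p ∖ ℤ_p} |x|_p^{s₁₂} |1 - x|_p^{s₃₂} dμ(x) = (1 - p^{-1})·p^{1+s₁₂+s₃₂}/(1 - p^{1+s₁₂+s₃₂}). -/

import Mathlib

open MeasureTheory Complex Pointwise

section aux

variable (p : ℕ) [hp : Fact p.Prime]

private lemma pR_one_lt : (1 : ℝ) < (p : ℝ) := by exact_mod_cast hp.out.one_lt

/-- The closed ball of radius `p^n` is the union of `p^n` translates of `ℤ_p`. -/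
private lemma ball_eq_iUnion (n : ℕ) :
    {x : ℚ_[p] | ‖x‖ ≤ (p : ℝ) ^ n} =
      ⋃ k : Fin (p ^ n),
        (((k : ℕ) : ℚ_[p]) * (p : ℚ_[p]) ^ (-(n : ℤ))) +ᵥ {x : ℚ_[p] | ‖x‖ ≤ 1} := by
  have hp0 : (p : ℚ_[p]) ≠ 0 := by
    exact_mod_cast (Nat.cast_ne_zero (R := ℚ_[p])).mpr hp.out.ne_zero
  ext x
  simp only [Set.mem_setOf_eq, Set.mem_iUnion, Set.mem_vadd_set_iff_neg_vadd_mem,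
    vadd_eq_add]
  constructor
  · intro hx
    set y : ℚ_[p] := x * (p : ℚ_[p]) ^ (n : ℕ) with hy
    have hyn : ‖y‖ ≤ 1 := by
      rw [hy, norm_mul, norm_pow, Padic.norm_p]
      have hpR : (0:ℝ) < (p:ℝ) := lt_trans one_pos (pR_one_lt p)
      calc ‖x‖ * ((p:ℝ)⁻¹) ^ n ≤ (p:ℝ) ^ n * ((p:ℝ)⁻¹) ^ n := by
            apply mul_le_mul_of_nonneg_right hx (pow_nonneg (inv_nonneg.mpr hpR.le) n)
        _ = 1 := by
            rw [← mul_pow, mul_inv_cancel₀ hpR.ne', one_pow]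
    set Y : ℤ_[p] := ⟨y, hyn⟩ with hY
    refine ⟨⟨Y.appr n, PadicInt.appr_lt Y n⟩, ?_⟩
    obtain ⟨c, hc⟩ := Ideal.mem_span_singleton'.mp (PadicInt.appr_spec n Y)
    have hcq : (y - (Y.appr n : ℚ_[p])) = (c : ℚ_[p]) * (p : ℚ_[p]) ^ (n : ℕ) := by
      have h2 := congrArg (fun z : ℤ_[p] => (z : ℚ_[p])) hc
      push_cast at h2
      exact h2.symm
    have hxy : x = y * (p : ℚ_[p]) ^ (-(n : ℤ)) := by
      rw [hy, mul_assoc, ← zpow_natCast (p : ℚ_[p]), ← zpow_add₀ hp0]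
      simp
    show ‖-(((Y.appr n : ℕ) : ℚ_[p]) * (p : ℚ_[p]) ^ (-(n : ℤ))) + x‖ ≤ 1
    have : -(((Y.appr n : ℕ) : ℚ_[p]) * (p : ℚ_[p]) ^ (-(n : ℤ))) + x = (c : ℚ_[p]) := by
      rw [hxy, ← sub_eq_neg_add, ← sub_mul, hcq, mul_assoc, ← zpow_natCast (p : ℚ_[p]),
        ← zpow_add₀ hp0]
      simp
    rw [this]
    exact c.2
  · rintro ⟨k, hk⟩
    have hz : ‖-(((k : ℕ) : ℚ_[p]) * (p : ℚ_[p]) ^ (-(n : ℤ))) + x‖ ≤ 1 := hk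
    have hkn : ‖((k : ℕ) : ℚ_[p]) * (p : ℚ_[p]) ^ (-(n : ℤ))‖ ≤ (p : ℝ) ^ n := by
      rw [norm_mul, norm_zpow, Padic.norm_p]
      calc ‖((k : ℕ) : ℚ_[p])‖ * ((p:ℝ)⁻¹) ^ (-(n:ℤ)) ≤ 1 * ((p:ℝ)⁻¹) ^ (-(n:ℤ)) := by
            apply mul_le_mul_of_nonneg_right (by exact_mod_cast Padic.norm_int_le_one ((k : ℕ) : ℤ))
              (zpow_nonneg (inv_nonneg.mpr (by positivity)) _)
        _ = (p : ℝ) ^ n := by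
            rw [one_mul, inv_zpow, ← zpow_neg, neg_neg, zpow_natCast]
    calc ‖x‖ = ‖((k : ℕ) : ℚ_[p]) * (p : ℚ_[p]) ^ (-(n : ℤ)) +
          (-(((k : ℕ) : ℚ_[p]) * (p : ℚ_[p]) ^ (-(n : ℤ))) + x)‖ := by ring_nf
      _ ≤ max (‖((k : ℕ) : ℚ_[p]) * (p : ℚ_[p]) ^ (-(n : ℤ))‖)
          (‖-(((k : ℕ) : ℚ_[p]) * (p : ℚ_[p]) ^ (-(n : ℤ))) + x‖) := Padic.nonarchimedean _ _
      _ ≤ (p : ℝ) ^ n := max_le hkn (hz.trans (one_le_pow₀ (pR_one_lt p).le))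

end aux

section aux2

variable (p : ℕ) [hp : Fact p.Prime]
variable [MeasurableSpace ℚ_[p]] [BorelSpace ℚ_[p]]
variable (μ : Measure ℚ_[p]) [μ.IsAddHaarMeasure]

private lemma meas_ball (n : ℕ) : MeasurableSet {x : ℚ_[p] | ‖x‖ ≤ (p : ℝ) ^ n} :=
  measurableSet_le measurable_norm measurable_const

private lemma measure_ball (hμ : μ {x : ℚ_[p] | ‖x‖ ≤ 1} = 1) (n : ℕ) :
    μ {x : ℚ_[p] | ‖x‖ ≤ (p : ℝ) ^ n} = (p : ENNReal) ^ n := by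
  have hmeas : MeasurableSet {x : ℚ_[p] | ‖x‖ ≤ 1} := by
    simpa using meas_ball p 0
  have hdisj : Pairwise (Function.onFun Disjoint fun k : Fin (p ^ n) =>
      (((k : ℕ) : ℚ_[p]) * (p : ℚ_[p]) ^ (-(n : ℤ))) +ᵥ {x : ℚ_[p] | ‖x‖ ≤ 1}) := by
    intro k j hkj
    rw [Function.onFun, Set.disjoint_left]
    rintro x hxk hxj
    rw [Set.mem_vadd_set_iff_neg_vadd_mem] at hxk hxj
    have hsub : ‖(((k : ℕ) : ℚ_[p]) - ((j : ℕ) : ℚ_[p])) * (p : ℚ_[p]) ^ (-(n : ℤ))‖ ≤ 1 := by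
      have : (((k : ℕ) : ℚ_[p]) - ((j : ℕ) : ℚ_[p])) * (p : ℚ_[p]) ^ (-(n : ℤ)) =
          (-(((j : ℕ) : ℚ_[p]) * (p : ℚ_[p]) ^ (-(n : ℤ))) + x) -
          (-(((k : ℕ) : ℚ_[p]) * (p : ℚ_[p]) ^ (-(n : ℤ))) + x) := by ring
      rw [this, sub_eq_add_neg]
      exact le_trans (Padic.nonarchimedean _ _)
        (max_le hxj (by rwa [norm_neg]))
    have hdvd : ((p : ℤ) ^ n) ∣ ((k : ℕ) : ℤ) - ((j : ℕ) : ℤ) := by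
      rw [← Padic.norm_int_le_pow_iff_dvd]
      have hpR : (0:ℝ) < (p:ℝ) := lt_trans one_pos (pR_one_lt p)
      rw [norm_mul, norm_zpow, Padic.norm_p, inv_zpow, ← zpow_neg, neg_neg] at hsub
      have hb : (0:ℝ) < (p:ℝ) ^ (n:ℤ) := zpow_pos hpR _
      push_cast
      calc ‖((k : ℕ) : ℚ_[p]) - ((j : ℕ) : ℚ_[p])‖
          = ‖((k : ℕ) : ℚ_[p]) - ((j : ℕ) : ℚ_[p])‖ * (p:ℝ) ^ (n:ℤ) * ((p:ℝ) ^ (n:ℤ))⁻¹ := by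
            field_simp
        _ ≤ 1 * ((p:ℝ) ^ (n:ℤ))⁻¹ :=
            mul_le_mul_of_nonneg_right hsub (inv_nonneg.mpr hb.le)
        _ = (p:ℝ) ^ (-(n:ℤ)) := by rw [one_mul, zpow_neg]
    apply hkj
    have habs : ((k : ℕ) : ℤ) - ((j : ℕ) : ℤ) = 0 := by
      apply Int.eq_zero_of_abs_lt_dvd hdvd
      have hk2 : ((k : ℕ) : ℤ) < (p : ℤ) ^ n := by exact_mod_cast k.2
      have hj2 : ((j : ℕ) : ℤ) < (p : ℤ) ^ n := by exact_mod_cast j.2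
      have hk0 : (0 : ℤ) ≤ ((k : ℕ) : ℤ) := Int.natCast_nonneg _
      have hj0 : (0 : ℤ) ≤ ((j : ℕ) : ℤ) := Int.natCast_nonneg _
      rw [abs_lt]
      omega
    have : (k : ℕ) = (j : ℕ) := by omega
    exact Fin.ext this
  rw [ball_eq_iUnion, measure_iUnion hdisj (fun k => hmeas.const_vadd _)]
  simp only [measure_vadd, hμ, tsum_fintype, Finset.sum_const, Finset.card_univ,
    Fintype.card_fin, nsmul_eq_mul, mul_one]
  push_cast
  ring

end aux2

section aux3

variable (p : ℕ) [hp : Fact p.Prime]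

private lemma sphere_eq (n : ℕ) :
    {x : ℚ_[p] | ‖x‖ = (p : ℝ) ^ (n + 1)} =
      {x : ℚ_[p] | ‖x‖ ≤ (p : ℝ) ^ (n + 1)} \ {x : ℚ_[p] | ‖x‖ ≤ (p : ℝ) ^ n} := by
  have hpR : (1:ℝ) < p := pR_one_lt p
  ext x
  simp only [Set.mem_setOf_eq, Set.mem_diff, not_le]
  constructor
  · intro hx
    exact ⟨le_of_eq hx, by rw [hx]; exact pow_lt_pow_right₀ hpR (by omega)⟩
  · rintro ⟨h1, h2⟩
    have hx0 : x ≠ 0 := by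
      rintro rfl
      simp only [norm_zero] at h2
      exact absurd h2 (not_lt.mpr (by positivity))
    rw [Padic.norm_eq_zpow_neg_valuation hx0] at h1 h2 ⊢
    rw [← zpow_natCast (p : ℝ)] at h1 h2
    rw [zpow_le_zpow_iff_right₀ hpR] at h1
    rw [zpow_lt_zpow_iff_right₀ hpR] at h2
    have : -x.valuation = ((n : ℤ) + 1) := by push_cast at h1 h2 ⊢; omega
    rw [this, ← zpow_natCast (p : ℝ) (n + 1)]
    norm_num

private lemma sphere_union :
    {x : ℚ_[p] | 1 < ‖x‖} = ⋃ n : ℕ, {x : ℚ_[p] | ‖x‖ = (p : ℝ) ^ (n + 1)} := by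
  have hpR : (1:ℝ) < p := pR_one_lt p
  ext x
  simp only [Set.mem_setOf_eq, Set.mem_iUnion]
  constructor
  · intro hx
    have hx0 : x ≠ 0 := by rintro rfl; norm_num at hx
    rw [Padic.norm_eq_zpow_neg_valuation hx0] at hx ⊢
    rw [← zpow_zero (p : ℝ), zpow_lt_zpow_iff_right₀ hpR] at hx
    refine ⟨(-x.valuation - 1).toNat, ?_⟩
    rw [← zpow_natCast (p : ℝ)]
    congr 1
    push_cast
    omega
  · rintro ⟨n, hn⟩
    rw [hn]
    exact one_lt_pow₀ hpR (by omega)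

end aux3

section aux4

variable (p : ℕ) [hp : Fact p.Prime]
variable [MeasurableSpace ℚ_[p]] [BorelSpace ℚ_[p]]
variable (μ : Measure ℚ_[p]) [μ.IsAddHaarMeasure]

private lemma meas_sphere (n : ℕ) : MeasurableSet {x : ℚ_[p] | ‖x‖ = (p : ℝ) ^ (n + 1)} := by
  have : {x : ℚ_[p] | ‖x‖ = (p : ℝ) ^ (n + 1)} = (fun x : ℚ_[p] => ‖x‖) ⁻¹' {(p : ℝ) ^ (n + 1)} := rfl
  rw [this]
  exact measurable_norm (measurableSet_singleton _)

private lemma measure_sphere (hμ : μ {x : ℚ_[p] | ‖x‖ ≤ 1} = 1) (n : ℕ) :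
    μ {x : ℚ_[p] | ‖x‖ = (p : ℝ) ^ (n + 1)} =
      ENNReal.ofReal ((p : ℝ) ^ (n + 1) - (p : ℝ) ^ n) := by
  have hpR : (1:ℝ) < p := pR_one_lt p
  rw [sphere_eq, measure_diff ?_ (meas_ball p n).nullMeasurableSet ?_,
    measure_ball p μ hμ, measure_ball p μ hμ]
  · have h0p : (0:ℝ) ≤ (p:ℝ) := by positivity
    rw [← ENNReal.ofReal_natCast p, ← ENNReal.ofReal_pow h0p, ← ENNReal.ofReal_pow h0p,
      ← ENNReal.ofReal_sub _ (by positivity)]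
  · intro x hx
    exact le_trans hx (pow_le_pow_right₀ hpR.le (by omega))
  · rw [measure_ball p μ hμ]
    exact ENNReal.pow_ne_top (ENNReal.natCast_ne_top p)

end aux4

private lemma measurable_cpow_const (s : ℂ) : Measurable fun z : ℂ => z ^ s := by
  have hdef : (fun z : ℂ => z ^ s) =
      fun z => if z = 0 then (if s = 0 then 1 else 0) else Complex.exp (Complex.log z * s) := by
    funext z
    rw [Complex.cpow_def]
  rw [hdef]
  exact Measurable.ite (measurableSet_eq_fun measurable_id measurable_const)
    measurable_const ((Complex.measurable_exp).comp (Complex.measurable_log.mul_const s))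

private lemma real_pow_rpow (p : ℕ) (hp0 : (0:ℝ) < p) (σ : ℝ) (n : ℕ) :
    ((p:ℝ) ^ (n+1)) ^ σ * (p:ℝ) ^ (n+1) = ((p:ℝ) ^ (σ + 1)) ^ (n+1) := by
  have h1 : ((p:ℝ) ^ (n+1) : ℝ) = (p:ℝ) ^ (((n+1 : ℕ)) : ℝ) := (Real.rpow_natCast _ _).symm
  rw [h1, ← Real.rpow_natCast ((p:ℝ) ^ (σ+1)) (n+1), ← Real.rpow_mul hp0.le,
    ← Real.rpow_mul hp0.le, ← Real.rpow_add hp0]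
  ring_nf

/-- The sector `Sect(∅)` contribution to the 4-point zeta function,
an integral over `ℚ_p ∖ ℤ_p`. -/
theorem padic_four_point_sector_empty (p : ℕ) [Fact p.Prime]
    [MeasurableSpace ℚ_[p]] [BorelSpace ℚ_[p]]
    (μ : Measure ℚ_[p]) [μ.IsAddHaarMeasure]
    (hμ : μ {x : ℚ_[p] | ‖x‖ ≤ 1} = 1)
    (s₁₂ s₃₂ : ℂ) (h : s₁₂.re + s₃₂.re < -1) :
    ∫ x in {x : ℚ_[p] | 1 < ‖x‖}, (‖x‖ : ℂ) ^ s₁₂ * (‖1 - x‖ : ℂ) ^ s₃₂ ∂μ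
      = (1 - (p : ℂ)⁻¹) * (p : ℂ) ^ (1 + s₁₂ + s₃₂) / (1 - (p : ℂ) ^ (1 + s₁₂ + s₃₂)) := by
  have hpR : (1:ℝ) < (p:ℝ) := pR_one_lt p
  have hp0R : (0:ℝ) < (p:ℝ) := lt_trans one_pos hpR
  have hpC : (p:ℂ) ≠ 0 := Nat.cast_ne_zero.mpr (Fact.out (p := p.Prime)).ne_zero
  set f : ℚ_[p] → ℂ := fun x => (‖x‖ : ℂ) ^ s₁₂ * (‖1 - x‖ : ℂ) ^ s₃₂ with hf
  set S : ℕ → Set ℚ_[p] := fun n => {x : ℚ_[p] | ‖x‖ = (p : ℝ) ^ (n + 1)} with hSdef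
  have hU : {x : ℚ_[p] | 1 < ‖x‖} = ⋃ n, S n := sphere_union p
  have hSm : ∀ n, MeasurableSet (S n) := fun n => meas_sphere p n
  have hSd : Pairwise (Function.onFun Disjoint S) := by
    intro m n hmn
    rw [Function.onFun, Set.disjoint_left]
    rintro x hxm hxn
    have hxm' : ‖x‖ = (p : ℝ) ^ (m + 1) := hxm
    have hxn' : ‖x‖ = (p : ℝ) ^ (n + 1) := hxn
    have h1 : (p:ℝ) ^ (m+1) = (p:ℝ) ^ (n+1) := by rw [← hxm', hxn']
    rcases Nat.lt_or_ge m n with hlt | hge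
    · exact absurd h1 (ne_of_lt (pow_lt_pow_right₀ hpR (by omega)))
    · exact absurd h1.symm (ne_of_lt (pow_lt_pow_right₀ hpR (by omega)))
  have hgt1 : ∀ n (x : ℚ_[p]), x ∈ S n → 1 < ‖x‖ := by
    intro n x hx
    have hx' : ‖x‖ = (p : ℝ) ^ (n + 1) := hx
    rw [hx']
    exact one_lt_pow₀ hpR (by omega)
  have hnorm1x : ∀ n (x : ℚ_[p]), x ∈ S n → ‖1 - x‖ = (p : ℝ) ^ (n + 1) := by
    intro n x hx
    have hx' : ‖x‖ = (p : ℝ) ^ (n + 1) := hx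
    have h1x : 1 < ‖x‖ := hgt1 n x hx
    rw [sub_eq_add_neg, Padic.add_eq_max_of_ne
      (by rw [norm_one, norm_neg]; exact ne_of_lt h1x), norm_one, norm_neg,
      max_eq_right h1x.le, hx']
  have hfval : ∀ n, Set.EqOn f
      (fun _ => ((((p:ℝ) ^ (n+1) : ℝ)) : ℂ) ^ s₁₂ * ((((p:ℝ) ^ (n+1) : ℝ)) : ℂ) ^ s₃₂) (S n) := by
    intro n x hx
    have hx' : ‖x‖ = (p : ℝ) ^ (n + 1) := hx
    simp only [hf]
    rw [hx', hnorm1x n x hx]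
  have hfm : Measurable f := by
    apply Measurable.mul
    · exact (measurable_cpow_const s₁₂).comp (Complex.measurable_ofReal.comp measurable_norm)
    · exact (measurable_cpow_const s₃₂).comp (Complex.measurable_ofReal.comp
        (measurable_norm.comp (by fun_prop)))
  set σ : ℝ := s₁₂.re + s₃₂.re with hσ
  have hfnorm : ∀ n (x : ℚ_[p]), x ∈ S n → ‖f x‖ = ((p:ℝ) ^ (n+1)) ^ σ := by
    intro n x hx
    have hP : (0:ℝ) < (p:ℝ) ^ (n+1) := by positivity
    have hx' : ‖x‖ = (p : ℝ) ^ (n + 1) := hx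
    simp only [hf]
    rw [hx', hnorm1x n x hx, norm_mul,
      Complex.norm_cpow_eq_rpow_re_of_pos hP, Complex.norm_cpow_eq_rpow_re_of_pos hP,
      ← Real.rpow_add hP]
  have hμS : ∀ n, μ (S n) = ENNReal.ofReal ((p:ℝ) ^ (n+1) - (p:ℝ) ^ n) :=
    measure_sphere p μ hμ
  set r : ENNReal := ENNReal.ofReal ((p:ℝ) ^ (σ + 1)) with hr
  have hrlt : r < 1 := by
    rw [hr]
    exact ENNReal.ofReal_lt_one.mpr
      (Real.rpow_lt_one_of_one_lt_of_neg hpR (by rw [hσ]; linarith))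
  have hint : IntegrableOn f (⋃ n, S n) μ := by
    constructor
    · exact hfm.aestronglyMeasurable.restrict
    · rw [hasFiniteIntegral_iff_norm]
      calc ∫⁻ x in ⋃ n, S n, ENNReal.ofReal ‖f x‖ ∂μ
          = ∑' n, ∫⁻ x in S n, ENNReal.ofReal ‖f x‖ ∂μ :=
            lintegral_iUnion hSm hSd _
        _ = ∑' n, ENNReal.ofReal (((p:ℝ) ^ (n+1)) ^ σ) * μ (S n) := by
            congr 1
            funext n
            rw [setLIntegral_congr_fun_ae (hSm n)
              (ae_of_all μ fun x hx => by rw [hfnorm n x hx]), setLIntegral_const]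
        _ ≤ ∑' n, r ^ (n+1) := by
            apply ENNReal.tsum_le_tsum
            intro n
            rw [hμS n]
            have hP : (0:ℝ) < (p:ℝ) ^ (n+1) := by positivity
            have hPn : (0:ℝ) ≤ (p:ℝ) ^ n := by positivity
            calc ENNReal.ofReal (((p:ℝ) ^ (n+1)) ^ σ) * ENNReal.ofReal ((p:ℝ) ^ (n+1) - (p:ℝ) ^ n)
                ≤ ENNReal.ofReal (((p:ℝ) ^ (n+1)) ^ σ) * ENNReal.ofReal ((p:ℝ) ^ (n+1)) :=
                  mul_le_mul_right (ENNReal.ofReal_le_ofReal (by linarith)) _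
              _ = r ^ (n+1) := by
                  rw [← ENNReal.ofReal_mul (Real.rpow_nonneg hP.le σ), real_pow_rpow p hp0R σ n,
                    hr, ← ENNReal.ofReal_pow (Real.rpow_nonneg hp0R.le _)]
        _ ≤ ∑' n, r ^ n := by
            apply ENNReal.tsum_le_tsum
            intro n
            calc r ^ (n+1) = r ^ n * r := pow_succ r n
              _ ≤ r ^ n * 1 := mul_le_mul_right hrlt.le _
              _ = r ^ n := mul_one _
        _ = (1 - r)⁻¹ := ENNReal.tsum_geometric r
        _ < ⊤ := ENNReal.inv_lt_top.mpr (tsub_pos_iff_lt.mpr hrlt)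
  rw [hU]
  have hiu := integral_iUnion hSm hSd hint
  rw [hf] at hiu
  rw [hiu]
  set q : ℂ := (p:ℂ) ^ (1 + s₁₂ + s₃₂) with hq
  have hqval : q = (p:ℂ) * (p:ℂ) ^ (s₁₂ + s₃₂) := by
    rw [hq, show (1 : ℂ) + s₁₂ + s₃₂ = 1 + (s₁₂ + s₃₂) by ring,
      Complex.cpow_add _ _ hpC, Complex.cpow_one]
  have hterm : ∀ n, (∫ x in S n, (‖x‖ : ℂ) ^ s₁₂ * (‖1 - x‖ : ℂ) ^ s₃₂ ∂μ)
      = (1 - (p:ℂ)⁻¹) * q ^ (n+1) := by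
    intro n
    rw [setIntegral_congr_fun (hSm n) (hfval n), setIntegral_const, measureReal_def, hμS n,
      ENNReal.toReal_ofReal (by
        have : (p:ℝ) ^ n ≤ (p:ℝ) ^ (n+1) := pow_le_pow_right₀ hpR.le (by omega)
        linarith)]
    have hCbase : ((((p:ℝ) ^ (n+1) : ℝ)) : ℂ) = (p:ℂ) ^ (n+1 : ℕ) := by push_cast; ring
    have hCne : ((p:ℂ)) ^ (n+1 : ℕ) ≠ 0 := pow_ne_zero _ hpC
    rw [Complex.real_smul, hCbase, ← Complex.cpow_add _ _ hCne]
    have hps : ((p:ℂ) ^ (n+1 : ℕ)) ^ (s₁₂ + s₃₂) = ((p:ℂ) ^ (s₁₂ + s₃₂)) ^ (n+1) := by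
      rw [← Complex.cpow_nat_mul'
        (by rw [Complex.natCast_arg, mul_zero]; exact neg_lt_zero.mpr Real.pi_pos)
        (by rw [Complex.natCast_arg, mul_zero]; exact Real.pi_pos.le),
        Complex.cpow_nat_mul]
    rw [hps, hqval, mul_pow]
    push_cast
    have hppow : ((p:ℂ)) ^ (n+1 : ℕ) ≠ 0 := hCne
    field_simp
    ring
  have hqnorm : ‖q‖ < 1 := by
    have hbase : (p:ℂ) = (((p:ℝ)) : ℂ) := by push_cast; ring
    rw [hq, hbase, Complex.norm_cpow_eq_rpow_re_of_pos hp0R]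
    apply Real.rpow_lt_one_of_one_lt_of_neg hpR
    simp only [Complex.add_re, Complex.one_re]
    linarith
  calc ∑' n, ∫ x in S n, (‖x‖ : ℂ) ^ s₁₂ * (‖1 - x‖ : ℂ) ^ s₃₂ ∂μ
      = ∑' n, (1 - (p:ℂ)⁻¹) * q ^ (n+1) := tsum_congr hterm
    _ = (1 - (p:ℂ)⁻¹) * ∑' n, q ^ (n+1) := tsum_mul_left
    _ = (1 - (p:ℂ)⁻¹) * (q * ∑' n, q ^ n) := by
        congr 1
        rw [← tsum_mul_left]
        exact tsum_congr fun n => pow_succ' q n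
    _ = (1 - (p:ℂ)⁻¹) * (q * (1 - q)⁻¹) := by rw [tsum_geometric_of_norm_lt_one hqnorm]
    _ = (1 - (p:ℂ)⁻¹) * q / (1 - q) := by rw [div_eq_mul_inv, mul_assoc]
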